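/- arXiv:1412.2997 — 8 statements merged into one kernel-verified Lean document; each statement's English description precedes it below -/
import Mathlib

section
/- For any natural number k ≥ 1, any vector x ∈ ℝ^k, and any K > 0, one has exp(K·(E_K(x) − E_{−K}(x))) − 1 ≤ (1/2)·(exp(K·(max x − min x)) − 1), where E_p denotes the log-exp mean with parameter p. -/
/-- The log-exp mean `E_p` of a vector of length `k+1`, for `p ≠ 0`. -/
noncomputable def logExpMean (p : ℝ) {k : ℕ} (x : Fin (k+1) → ℝ) : ℝ :=
  (1/p) * Real.log ((∑ i, Real.exp (p * x i)) / (k+1))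

/-- The largest entry of a vector. -/
noncomputable def vmax {k : ℕ} (x : Fin (k+1) → ℝ) : ℝ :=
  Finset.univ.sup' Finset.univ_nonempty x

/-- The smallest entry of a vector. -/
noncomputable def vmin {k : ℕ} (x : Fin (k+1) → ℝ) : ℝ :=
  Finset.univ.inf' Finset.univ_nonempty x

set_option maxHeartbeats 1000000 in
/-- exp(K(E_K(x) − E_{−K}(x))) − 1 ≤ ½(exp(K(max x − min x)) − 1). -/
theorem stmt1 (k : ℕ) (x : Fin (k+1) → ℝ) (K : ℝ) (hK : 0 < K) :
    Real.exp (K * (logExpMean K x - logExpMean (-K) x)) - 1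
      ≤ (1/2) * (Real.exp (K * (vmax x - vmin x)) - 1) := by
  have hKne : K ≠ 0 := hK.ne'
  set n : ℝ := ((k:ℝ)+1) with hn_def
  have hn : (0:ℝ) < n := by positivity
  set a : Fin (k+1) → ℝ := fun i => Real.exp (K * x i) with ha
  have hapos : ∀ i, 0 < a i := fun i => Real.exp_pos _
  set M := Real.exp (K * vmax x) with hMdef
  set m := Real.exp (K * vmin x) with hmdef
  have hMpos : 0 < M := Real.exp_pos _
  have hmpos : 0 < m := Real.exp_pos _
  have haM : ∀ i, a i ≤ M := fun i => Real.exp_le_exp.2 (by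
    have h := Finset.le_sup' x (Finset.mem_univ i)
    have : x i ≤ vmax x := h
    nlinarith)
  have hma : ∀ i, m ≤ a i := fun i => Real.exp_le_exp.2 (by
    have h := Finset.inf'_le x (Finset.mem_univ i)
    have : vmin x ≤ x i := h
    nlinarith)
  have hmM : m ≤ M := le_trans (hma 0) (haM 0)
  set S := ∑ i, a i with hS
  set T := ∑ i, (a i)⁻¹ with hT
  have hSpos : 0 < S := Finset.sum_pos (fun i _ => hapos i) Finset.univ_nonempty
  have hTpos : 0 < T := Finset.sum_pos (fun i _ => inv_pos.2 (hapos i)) Finset.univ_nonempty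
  -- rewrite the LHS exponential
  have h1 : Real.exp (K * (logExpMean K x - logExpMean (-K) x)) = (S/n) * (T/n) := by
    have e1 : K * logExpMean K x = Real.log (S / n) := by
      unfold logExpMean
      push_cast
      field_simp
      rfl
    have e2 : K * logExpMean (-K) x = - Real.log (T / n) := by
      unfold logExpMean
      have hT' : (∑ i, Real.exp (-K * x i)) = T := by
        rw [hT]
        refine Finset.sum_congr rfl fun i _ => ?_
        rw [ha, ← Real.exp_neg]
        ring_nf
      rw [hT']
      have hKne' : -K ≠ 0 := neg_ne_zero.2 hKne
      push_cast
      field_simp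
      ring
    rw [mul_sub, e1, e2, sub_neg_eq_add, Real.exp_add,
      Real.exp_log (by positivity), Real.exp_log (by positivity)]
  have hr : Real.exp (K * (vmax x - vmin x)) = M / m := by
    rw [mul_sub, Real.exp_sub]
  -- pointwise bound
  have pt : ∀ i j : Fin (k+1), a i * (a j)⁻¹ + a j * (a i)⁻¹ ≤ M/m + m/M := by
    intro i j
    have hp := hapos i
    have hq := hapos j
    have e : a i * (a j)⁻¹ + a j * (a i)⁻¹ = (a i^2 + a j^2) / (a i * a j) := by
      field_simp
    have e2 : M/m + m/M = (M^2 + m^2) / (m*M) := by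
      field_simp
    rw [e, e2, div_le_div_iff₀ (by positivity) (by positivity)]
    have h1 : 0 ≤ M * a j - m * a i := by nlinarith [haM i, hma j]
    have h2 : 0 ≤ M * a i - m * a j := by nlinarith [haM j, hma i]
    nlinarith [mul_nonneg h1 h2]
  -- key sum bound
  have key : 2 * (S * T) ≤ n * n * (M/m + m/M) := by
    have hst : S * T = ∑ i, ∑ j, a i * (a j)⁻¹ := Finset.sum_mul_sum _ _ _ _
    have hsym : S * T = ∑ i, ∑ j, a j * (a i)⁻¹ := by
      rw [hst, Finset.sum_comm]
    have hdouble : 2 * (S * T) = ∑ i : Fin (k+1), ∑ j : Fin (k+1),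
        (a i * (a j)⁻¹ + a j * (a i)⁻¹) := by
      simp only [Finset.sum_add_distrib]
      rw [two_mul]
      nth_rewrite 1 [hst]
      nth_rewrite 1 [hsym]
      ring
    rw [hdouble]
    calc ∑ i : Fin (k+1), ∑ j : Fin (k+1), (a i * (a j)⁻¹ + a j * (a i)⁻¹)
        ≤ ∑ _i : Fin (k+1), ∑ _j : Fin (k+1), (M/m + m/M) := by
          refine Finset.sum_le_sum fun i _ => Finset.sum_le_sum fun j _ => pt i j
      _ = n * n * (M/m + m/M) := by
          simp [Finset.sum_const, Finset.card_univ]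
          push_cast [hn_def]
          ring
  rw [h1, hr]
  clear_value a M m S T n
  have h2 : (S/n) * (T/n) ≤ (M/m + m/M) / 2 := by
    rw [div_mul_div_comm, div_le_div_iff₀ (by positivity) (by norm_num)]
    linarith [key, mul_comm (M/m + m/M) (n*n)]
  have hs : m / M ≤ 1 := (div_le_one hMpos).2 hmM
  linarith [h2, hs]
end

section
/- Let a_0 = a > 0, b_0 = b > 0 with b ≤ a, and define a_{n+1} = (a_n + b_n)/2, b_{n+1} = √(a_n·b_n). Then for every n, a_{n+1} − b_{n+1} ≤ (a_n − b_n)²/(8·b_0). In particular the difference a_n − b_n converges to 0 quadratically. -/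
/-- for the arithmetic-geometric iteration starting from
    `a 0 ≥ b 0 > 0`, one has `a (n+1) − b (n+1) ≤ (a n − b n)² / (8 b 0)`. -/
theorem stmt2 (a b : ℕ → ℝ) (hb0 : 0 < b 0) (hba : b 0 ≤ a 0)
    (hA : ∀ n, a (n+1) = (a n + b n) / 2)
    (hB : ∀ n, b (n+1) = Real.sqrt (a n * b n)) :
    ∀ n, a (n+1) - b (n+1) ≤ (a n - b n)^2 / (8 * b 0) := by
  have key : ∀ n, 0 < b n ∧ b n ≤ a n ∧ b 0 ≤ b n := by
    intro n
    induction n with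
    | zero => exact ⟨hb0, hba, le_refl _⟩
    | succ n ih =>
      obtain ⟨hbp, hle, hb0n⟩ := ih
      have hap : 0 < a n := lt_of_lt_of_le hbp hle
      have hsq : 0 < a n * b n := mul_pos hap hbp
      refine ⟨?_, ?_, ?_⟩
      · rw [hB]; exact Real.sqrt_pos.mpr hsq
      · rw [hA, hB]
        have h1 : a n * b n ≤ ((a n + b n)/2)^2 := by nlinarith [sq_nonneg (a n - b n)]
        calc Real.sqrt (a n * b n) ≤ Real.sqrt (((a n + b n)/2)^2) := Real.sqrt_le_sqrt h1
          _ = (a n + b n)/2 := Real.sqrt_sq (by positivity)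
      · rw [hB]
        calc b 0 ≤ b n := hb0n
          _ = Real.sqrt (b n * b n) := (Real.sqrt_mul_self hbp.le).symm
          _ ≤ Real.sqrt (a n * b n) :=
            Real.sqrt_le_sqrt (mul_le_mul_of_nonneg_right hle hbp.le)
  intro n
  obtain ⟨hbp, hle, hb0n⟩ := key n
  have hap : 0 < a n := lt_of_lt_of_le hbp hle
  set x := Real.sqrt (a n) with hx
  set y := Real.sqrt (b n) with hy
  have hx2 : x ^ 2 = a n := Real.sq_sqrt hap.le
  have hy2 : y ^ 2 = b n := Real.sq_sqrt hbp.le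
  have hxy : y ≤ x := Real.sqrt_le_sqrt hle
  have hy0 : 0 ≤ y := Real.sqrt_nonneg _
  have hby : b 0 ≤ y ^ 2 := by rw [hy2]; exact hb0n
  rw [hA, hB, Real.sqrt_mul hap.le, ← hx, ← hy, le_div_iff₀ (by positivity)]
  have h4 : 4 * b 0 ≤ (x + y) ^ 2 := by nlinarith [mul_nonneg (sub_nonneg.mpr hxy) hy0]
  have hfin := mul_le_mul_of_nonneg_right h4 (sq_nonneg (x - y))
  nlinarith [hfin, hx2, hy2]
end

section
/- Let f ∈ C²(I) with f′ ≠ 0 on an interval I, and suppose |f″/f′| ≤ K on I for some K > 0. Then for every k ∈ ℕ and every x ∈ I^k, E_{−K}(x) ≤ M_f(x) ≤ E_K(x), where M_f is the quasi-arithmetic mean generated by f and E_p is the log-exp mean with parameter p. -/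
open Real Set

/-- Core case: `f' > 0` on `I` and `f'' ≤ K f'`. Then `M ≤ E_K(x)`. -/
lemma stmt4_core (I : Set ℝ) (hI : Convex ℝ I) (f f' f'' : ℝ → ℝ)
    (hd1 : ∀ t ∈ I, HasDerivWithinAt f (f' t) I t)
    (hd2 : ∀ t ∈ I, HasDerivWithinAt f' (f'' t) I t)
    (hpos : ∀ t ∈ I, 0 < f' t)
    (K : ℝ) (hK : 0 < K)
    (hb : ∀ t ∈ I, f'' t ≤ K * f' t)
    (k : ℕ) (x : Fin (k+1) → ℝ) (hx : ∀ i, x i ∈ I)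
    (M : ℝ) (hMI : M ∈ I) (hM : f M = (∑ i, f (x i)) / (k+1)) :
    M ≤ logExpMean K x := by
  set S : Set ℝ := (fun t => Real.exp (K * t)) '' I with hSdef
  set L : ℝ → ℝ := fun u => Real.log u / K with hLdef
  have hLinv : ∀ t, L (Real.exp (K * t)) = t := fun t => by
    simp [hLdef, Real.log_exp, mul_div_cancel_left₀ _ hK.ne']
  have hSpos : ∀ u ∈ S, 0 < u := by rintro u ⟨t, ht, rfl⟩; exact Real.exp_pos _
  have hLmap : Set.MapsTo L S I := by rintro u ⟨t, ht, rfl⟩; rw [hLinv]; exact ht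
  have hSconv : Convex ℝ S := by
    rw [convex_iff_ordConnected]
    exact (hI.isPreconnected.image _
      ((Real.continuous_exp.comp (continuous_const.mul continuous_id)).continuousOn)).ordConnected
  set F : ℝ → ℝ := fun u => f (L u) with hFdef
  set F' : ℝ → ℝ := fun u => f' (L u) * (u⁻¹ / K) with hF'def
  have hlog : ∀ u ∈ S, HasDerivWithinAt L (u⁻¹ / K) S u := fun u hu =>
    ((Real.hasDerivAt_log (hSpos u hu).ne').hasDerivWithinAt).div_const K
  have hFd : ∀ u ∈ S, HasDerivWithinAt F (F' u) S u := fun u hu =>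
    (hd1 (L u) (hLmap hu)).comp u (hlog u hu) hLmap
  have hF'd : ∀ u ∈ S, HasDerivWithinAt F'
      (f'' (L u) * (u⁻¹ / K) * (u⁻¹ / K) + f' (L u) * (-(u ^ 2)⁻¹ / K)) S u := by
    intro u hu
    have h1 : HasDerivWithinAt (fun v => f' (L v)) (f'' (L u) * (u⁻¹ / K)) S u :=
      (hd2 (L u) (hLmap hu)).comp u (hlog u hu) hLmap
    have h2 : HasDerivWithinAt (fun v : ℝ => v⁻¹ / K) (-(u ^ 2)⁻¹ / K) S u :=
      ((hasDerivAt_inv (hSpos u hu).ne').hasDerivWithinAt).div_const K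
    exact h1.mul h2
  have hFcont : ContinuousOn F S := fun u hu => (hFd u hu).continuousWithinAt
  have hconc : ConcaveOn ℝ S F := by
    apply concaveOn_of_hasDerivWithinAt2_nonpos hSconv hFcont
      (f' := F')
      (f'' := fun u => f'' (L u) * (u⁻¹ / K) * (u⁻¹ / K) + f' (L u) * (-(u ^ 2)⁻¹ / K))
      (fun u hu => (hFd u (interior_subset hu)).mono interior_subset)
      (fun u hu => (hF'd u (interior_subset hu)).mono interior_subset)
    intro u hu
    have huS : u ∈ S := interior_subset hu
    have hu0 : 0 < u := hSpos u huS
    have hLI : L u ∈ I := hLmap huS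
    have hmain : f'' (L u) * (u⁻¹ / K) * (u⁻¹ / K) + f' (L u) * (-(u ^ 2)⁻¹ / K)
        = (f'' (L u) - K * f' (L u)) / (K ^ 2 * u ^ 2) := by
      field_simp
      ring
    rw [hmain]
    apply div_nonpos_of_nonpos_of_nonneg
    · linarith [hb (L u) hLI]
    · positivity
  -- Jensen
  have hk1 : (0:ℝ) < (k:ℝ) + 1 := by positivity
  set w : Fin (k+1) → ℝ := fun _ => 1/((k:ℝ)+1) with hwdef
  have hw0 : ∀ i ∈ Finset.univ, (0:ℝ) ≤ w i := fun i _ => by positivity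
  have hw1 : ∑ i : Fin (k+1), w i = 1 := by
    simp only [hwdef, Finset.sum_const, Finset.card_univ, Fintype.card_fin, nsmul_eq_mul]
    push_cast
    field_simp
  have hmem : ∀ i ∈ Finset.univ, Real.exp (K * x i) ∈ S := fun i _ => ⟨x i, hx i, rfl⟩
  have hjensen := hconc.le_map_sum hw0 hw1 hmem
  set U : ℝ := ∑ i, w i • Real.exp (K * x i) with hUdef
  have hUval : U = (∑ i, Real.exp (K * x i)) / ((k:ℝ)+1) := by
    rw [hUdef, Finset.sum_div]
    refine Finset.sum_congr rfl fun i _ => ?_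
    simp only [hwdef, smul_eq_mul]
    ring
  have hUS : U ∈ S := hSconv.sum_mem hw0 hw1 hmem
  obtain ⟨tstar, htI, htU⟩ := hUS
  have hE : logExpMean K x = tstar := by
    have : L U = tstar := by rw [← htU, hLinv]
    rw [logExpMean, ← hUval]
    rw [hLdef] at this
    push_cast
    rw [← this]
    ring
  have hLHS : (∑ i, w i • F (Real.exp (K * x i))) = f M := by
    rw [hM, Finset.sum_div]
    refine Finset.sum_congr rfl fun i _ => ?_
    simp only [hwdef, hFdef, hLinv, smul_eq_mul]
    ring
  have hRHS : F U = f tstar := by rw [← htU]; simp only [hFdef]; rw [hLinv]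
  have hfle : f M ≤ f tstar := by
    rw [← hLHS, ← hRHS]
    exact hjensen
  -- strict monotonicity of f on I
  have hfc : ContinuousOn f I := fun t ht => (hd1 t ht).continuousWithinAt
  have hmono : StrictMonoOn f I := by
    apply strictMonoOn_of_deriv_pos hI hfc
    intro t ht
    rw [deriv_eqOn isOpen_interior
      (fun s hs => (hd1 s (interior_subset hs)).mono interior_subset) ht]
    exact hpos t (interior_subset ht)
  rw [hE]
  exact (hmono.le_iff_le hMI htI).mp hfle

/-- Upper bound, without a sign hypothesis on `f'`. -/
lemma stmt4_upper (I : Set ℝ) (hI : Convex ℝ I) (f f' f'' : ℝ → ℝ)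
    (hd1 : ∀ t ∈ I, HasDerivWithinAt f (f' t) I t)
    (hd2 : ∀ t ∈ I, HasDerivWithinAt f' (f'' t) I t)
    (hne : ∀ t ∈ I, f' t ≠ 0)
    (K : ℝ) (hK : 0 < K)
    (hb : ∀ t ∈ I, |f'' t / f' t| ≤ K)
    (k : ℕ) (x : Fin (k+1) → ℝ) (hx : ∀ i, x i ∈ I)
    (M : ℝ) (hMI : M ∈ I) (hM : f M = (∑ i, f (x i)) / (k+1)) :
    M ≤ logExpMean K x := by
  have hf'c : ContinuousOn f' I := fun t ht => (hd2 t ht).continuousWithinAt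
  rcases lt_or_gt_of_ne (hne M hMI) with hMneg | hMpos
  · -- f' < 0 everywhere; apply core to -f
    have hall : ∀ t ∈ I, f' t < 0 := by
      intro t ht
      rcases lt_or_gt_of_ne (hne t ht) with h | h
      · exact h
      · exfalso
        have h0 : (0:ℝ) ∈ Set.Icc (f' M) (f' t) := ⟨hMneg.le, h.le⟩
        obtain ⟨s, hsI, hs0⟩ := hI.isPreconnected.intermediate_value hMI ht hf'c h0
        exact hne s hsI hs0
    apply stmt4_core I hI (fun t => -f t) (fun t => -f' t) (fun t => -f'' t)
      (fun t ht => (hd1 t ht).neg) (fun t ht => (hd2 t ht).neg)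
      (fun t ht => by simpa using hall t ht) K hK ?_ k x hx M hMI ?_
    · intro t ht
      have h1 : f'' t / f' t ≤ K := le_of_abs_le (hb t ht)
      have h2 : f' t < 0 := hall t ht
      have h3 : f'' t / f' t * f' t = f'' t := div_mul_cancel₀ _ h2.ne
      show -f'' t ≤ K * -f' t
      nlinarith [mul_nonneg (sub_nonneg.mpr h1) (neg_nonneg.mpr h2.le)]
    · show -f M = (∑ i, -f (x i)) / ((k:ℝ)+1)
      rw [hM, Finset.sum_neg_distrib, neg_div]
  · -- f' > 0 everywhere
    have hall : ∀ t ∈ I, 0 < f' t := by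
      intro t ht
      rcases lt_or_gt_of_ne (hne t ht) with h | h
      · exfalso
        have h0 : (0:ℝ) ∈ Set.Icc (f' t) (f' M) := ⟨h.le, hMpos.le⟩
        obtain ⟨s, hsI, hs0⟩ := hI.isPreconnected.intermediate_value ht hMI hf'c h0
        exact hne s hsI hs0
      · exact h
    apply stmt4_core I hI f f' f'' hd1 hd2 hall K hK ?_ k x hx M hMI hM
    intro t ht
    have h1 : f'' t / f' t ≤ K := le_of_abs_le (hb t ht)
    exact (div_le_iff₀ (hall t ht)).mp h1

lemma logExpMean_neg_eq (K : ℝ) {k : ℕ} (x : Fin (k+1) → ℝ) :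
    logExpMean (-K) x = - logExpMean K (fun i => -(x i)) := by
  have h : ∀ i, -K * x i = K * (-(x i)) := fun i => by ring
  simp only [logExpMean, h]
  ring

/-- if `f ∈ C²(I)`, `f' ≠ 0` on `I` and `|f''/f'| ≤ K`, then
    `E_{−K}(x) ≤ M_f(x) ≤ E_K(x)`, where `M` is the quasi-arithmetic mean of `x`,
    characterized by `M ∈ I` and `f M = (Σ f(xᵢ))/k`. -/
theorem stmt4 (I : Set ℝ) (hI : Convex ℝ I) (f f' f'' : ℝ → ℝ)
    (hd1 : ∀ t ∈ I, HasDerivWithinAt f (f' t) I t)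
    (hd2 : ∀ t ∈ I, HasDerivWithinAt f' (f'' t) I t)
    (hc : ContinuousOn f'' I)
    (hne : ∀ t ∈ I, f' t ≠ 0)
    (K : ℝ) (hK : 0 < K)
    (hb : ∀ t ∈ I, |f'' t / f' t| ≤ K)
    (k : ℕ) (x : Fin (k+1) → ℝ) (hx : ∀ i, x i ∈ I)
    (M : ℝ) (hMI : M ∈ I) (hM : f M = (∑ i, f (x i)) / (k+1)) :
    logExpMean (-K) x ≤ M ∧ M ≤ logExpMean K x := by
  constructor
  · -- lower bound via reflection t ↦ -t
    have hmap : Set.MapsTo (fun s : ℝ => -s) (-I) I := fun s hs => Set.mem_neg.mp hs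
    have hd1' : ∀ t ∈ -I, HasDerivWithinAt (fun s => f (-s)) (-(f' (-t))) (-I) t := by
      intro t ht
      have hneg : HasDerivWithinAt (fun s : ℝ => -s) (-1) (-I) t :=
        (hasDerivAt_neg t).hasDerivWithinAt
      have := (hd1 (-t) (hmap ht)).comp t hneg hmap
      simpa [Function.comp_def] using this
    have hd2' : ∀ t ∈ -I, HasDerivWithinAt (fun s => -(f' (-s))) (f'' (-t)) (-I) t := by
      intro t ht
      have hneg : HasDerivWithinAt (fun s : ℝ => -s) (-1) (-I) t :=
        (hasDerivAt_neg t).hasDerivWithinAt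
      have := ((hd2 (-t) (hmap ht)).comp t hneg hmap).neg
      simpa [Function.comp_def, Pi.neg_def] using this
    have hne' : ∀ t ∈ -I, -(f' (-t)) ≠ 0 := fun t ht => by
      simpa using hne (-t) (hmap ht)
    have hb' : ∀ t ∈ -I, |f'' (-t) / -(f' (-t))| ≤ K := by
      intro t ht
      rw [div_neg, abs_neg]
      exact hb (-t) (hmap ht)
    have hM' : f (-(-M)) = (∑ i, f (-(-(x i)))) / (k+1) := by
      simpa using hM
    have := stmt4_upper (-I) hI.neg (fun s => f (-s)) (fun s => -(f' (-s)))
      (fun s => f'' (-s)) hd1' hd2' hne' K hK hb' k (fun i => -(x i))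
      (fun i => by simpa using hx i) (-M) (by simpa using hMI) hM'
    rw [logExpMean_neg_eq]
    linarith
  · exact stmt4_upper I hI f f' f'' hd1 hd2 hne K hK hb k x hx M hMI hM
end

section
/- Let f, g ∈ C²(I) with f′·g′ ≠ 0 on an interval I. If f″/f′ ≥ g″/g′ everywhere on I, then M_f(x) ≥ M_g(x) for every k ∈ ℕ and every x ∈ I^k, where M_h denotes the quasi-arithmetic mean generated by h. -/
open Set

/-- A continuous nonvanishing function on a convex set keeps its sign. -/
lemma sign_const_aux {I : Set ℝ} (hI : Convex ℝ I) {p : ℝ → ℝ}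
    (hp : ContinuousOn p I) (hne : ∀ t ∈ I, p t ≠ 0) {a b : ℝ}
    (ha : a ∈ I) (hb : b ∈ I) (hpa : 0 < p a) : 0 < p b := by
  by_contra h
  push_neg at h
  have hpb : p b < 0 := lt_of_le_of_ne h (hne b hb)
  have hsub : uIcc a b ⊆ I := hI.ordConnected.uIcc_subset ha hb
  have h0 : (0 : ℝ) ∈ uIcc (p a) (p b) := by
    rw [Set.mem_uIcc]; right; exact ⟨hpb.le, hpa.le⟩
  obtain ⟨s, hs, hps⟩ := intermediate_value_uIcc (hp.mono hsub) h0
  exact hne s (hsub hs) hps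

/-- Auxiliary version of the comparison theorem with `f' > 0` on `I`. -/
lemma stmt5_aux (I : Set ℝ) (hI : Convex ℝ I) (f f' f'' g g' g'' : ℝ → ℝ)
    (hdf1 : ∀ t ∈ I, HasDerivWithinAt f (f' t) I t)
    (hdf2 : ∀ t ∈ I, HasDerivWithinAt f' (f'' t) I t)
    (hdg1 : ∀ t ∈ I, HasDerivWithinAt g (g' t) I t)
    (hdg2 : ∀ t ∈ I, HasDerivWithinAt g' (g'' t) I t)
    (hne : ∀ t ∈ I, f' t ≠ 0 ∧ g' t ≠ 0)
    (hcmp : ∀ t ∈ I, g'' t / g' t ≤ f'' t / f' t)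
    (hfpos : ∀ t ∈ I, 0 < f' t)
    (k : ℕ) (x : Fin (k+1) → ℝ) (hx : ∀ i, x i ∈ I)
    (M N : ℝ) (hMI : M ∈ I) (hNI : N ∈ I)
    (hM : f M = (∑ i, f (x i)) / (k+1))
    (hN : g N = (∑ i, g (x i)) / (k+1)) :
    N ≤ M := by
  set lam : ℝ := f' N / g' N with hlam
  set r : ℝ → ℝ := fun t => f' t / g' t with hrdef
  have hgcont : ContinuousOn g' I := fun t ht => (hdg2 t ht).continuousWithinAt
  have hfcont : ContinuousOn f I := fun t ht => (hdf1 t ht).continuousWithinAt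
  have hr : ∀ t ∈ I, HasDerivWithinAt r
      ((f'' t * g' t - f' t * g'' t) / (g' t)^2) I t :=
    fun t ht => (hdf2 t ht).div (hdg2 t ht) (hne t ht).2
  have hrcont : ContinuousOn r I := fun t ht => (hr t ht).continuousWithinAt
  -- numerator identity
  have hnum : ∀ t ∈ I, f'' t * g' t - f' t * g'' t
      = (f' t * g' t) * (f'' t / f' t - g'' t / g' t) := by
    intro t ht
    have h1 := (hne t ht).1
    have h2 := (hne t ht).2
    field_simp
  -- The key: h N ≤ h t on I, where h t = f t - lam * g t.
  have key : ∀ t ∈ I, f N - lam * g N ≤ f t - lam * g t := by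
    set h : ℝ → ℝ := fun t => f t - lam * g t with hhdef
    have hd : ∀ t ∈ I, HasDerivWithinAt h (f' t - lam * g' t) I t :=
      fun t ht => (hdf1 t ht).sub ((hdg1 t ht).const_mul lam)
    have hsign : ∀ t ∈ I, f' t - lam * g' t = g' t * (r t - r N) := by
      intro t ht
      have h2 := (hne t ht).2
      have h2N := (hne N hNI).2
      simp only [hrdef, hlam]
      field_simp
    -- r is monotone (resp. antitone) depending on the sign of g'
    rcases (hne N hNI).2.lt_or_gt with hgN | hgN
    · -- g' < 0 on I: r antitone
      have hgneg : ∀ t ∈ I, g' t < 0 := by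
        intro t ht
        simpa using sign_const_aux hI (p := fun s => -g' s) hgcont.neg
          (fun s hs => neg_ne_zero.2 (hne s hs).2) hNI ht (by simpa using hgN)
      have hranti : AntitoneOn r I := by
        apply antitoneOn_of_hasDerivWithinAt_nonpos hI hrcont
          (fun t ht => (hr t (interior_subset ht)).mono interior_subset)
        intro t ht
        have ht' : t ∈ I := interior_subset ht
        rw [hnum t ht']
        apply div_nonpos_of_nonpos_of_nonneg _ (sq_nonneg _)
        exact mul_nonpos_of_nonpos_of_nonneg
          (le_of_lt (mul_neg_of_pos_of_neg (hfpos t ht') (hgneg t ht')))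
          (by linarith [hcmp t ht'])
      intro t ht
      rcases le_total t N with hle | hle
      · have hconv : Convex ℝ (I ∩ Iic N) := hI.inter (convex_Iic N)
        have hanti : AntitoneOn h (I ∩ Iic N) := by
          apply antitoneOn_of_hasDerivWithinAt_nonpos hconv
            (fun s hs => ((hd s hs.1).continuousWithinAt).mono inter_subset_left)
            (fun s hs => ((hd s (interior_subset hs).1).mono
              (interior_subset.trans inter_subset_left)))
          intro s hs
          obtain ⟨hsI, hsN⟩ := interior_subset hs
          rw [hsign s hsI]
          have h1 : r N ≤ r s := hranti hsI hNI hsN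
          exact mul_nonpos_of_nonpos_of_nonneg (hgneg s hsI).le (by linarith)
        exact hanti ⟨ht, hle⟩ ⟨hNI, le_refl N⟩ hle
      · have hconv : Convex ℝ (I ∩ Ici N) := hI.inter (convex_Ici N)
        have hmono : MonotoneOn h (I ∩ Ici N) := by
          apply monotoneOn_of_hasDerivWithinAt_nonneg hconv
            (fun s hs => ((hd s hs.1).continuousWithinAt).mono inter_subset_left)
            (fun s hs => ((hd s (interior_subset hs).1).mono
              (interior_subset.trans inter_subset_left)))
          intro s hs
          obtain ⟨hsI, hsN⟩ := interior_subset hs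
          rw [hsign s hsI]
          have h1 : r s ≤ r N := hranti hNI hsI hsN
          nlinarith [hgneg s hsI, h1]
        exact hmono ⟨hNI, le_refl N⟩ ⟨ht, hle⟩ hle
    · -- g' > 0 on I: r monotone
      have hgpos : ∀ t ∈ I, 0 < g' t := fun t ht =>
        sign_const_aux hI hgcont (fun s hs => (hne s hs).2) hNI ht hgN
      have hrmono : MonotoneOn r I := by
        apply monotoneOn_of_hasDerivWithinAt_nonneg hI hrcont
          (fun t ht => (hr t (interior_subset ht)).mono interior_subset)
        intro t ht
        have ht' : t ∈ I := interior_subset ht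
        rw [hnum t ht']
        apply div_nonneg _ (sq_nonneg _)
        exact mul_nonneg (le_of_lt (mul_pos (hfpos t ht') (hgpos t ht')))
          (by linarith [hcmp t ht'])
      intro t ht
      rcases le_total t N with hle | hle
      · have hconv : Convex ℝ (I ∩ Iic N) := hI.inter (convex_Iic N)
        have hanti : AntitoneOn h (I ∩ Iic N) := by
          apply antitoneOn_of_hasDerivWithinAt_nonpos hconv
            (fun s hs => ((hd s hs.1).continuousWithinAt).mono inter_subset_left)
            (fun s hs => ((hd s (interior_subset hs).1).mono
              (interior_subset.trans inter_subset_left)))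
          intro s hs
          obtain ⟨hsI, hsN⟩ := interior_subset hs
          rw [hsign s hsI]
          have h1 : r s ≤ r N := hrmono hsI hNI hsN
          exact mul_nonpos_of_nonneg_of_nonpos (hgpos s hsI).le (by linarith)
        exact hanti ⟨ht, hle⟩ ⟨hNI, le_refl N⟩ hle
      · have hconv : Convex ℝ (I ∩ Ici N) := hI.inter (convex_Ici N)
        have hmono : MonotoneOn h (I ∩ Ici N) := by
          apply monotoneOn_of_hasDerivWithinAt_nonneg hconv
            (fun s hs => ((hd s hs.1).continuousWithinAt).mono inter_subset_left)
            (fun s hs => ((hd s (interior_subset hs).1).mono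
              (interior_subset.trans inter_subset_left)))
          intro s hs
          obtain ⟨hsI, hsN⟩ := interior_subset hs
          rw [hsign s hsI]
          have h1 : r N ≤ r s := hrmono hNI hsI hsN
          exact mul_nonneg (hgpos s hsI).le (by linarith)
        exact hmono ⟨hNI, le_refl N⟩ ⟨ht, hle⟩ hle
  -- Sum the inequality over the points x i.
  have hk : (0 : ℝ) < (k : ℝ) + 1 := by positivity
  have hsumf : ∑ i, f (x i) = ((k : ℝ) + 1) * f M := by
    rw [hM]; field_simp
  have hsumg : ∑ i, g (x i) = ((k : ℝ) + 1) * g N := by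
    rw [hN]; field_simp
  have hsum : ((k : ℝ) + 1) * (f N - lam * g N)
      ≤ ((k : ℝ) + 1) * f M - lam * (((k : ℝ) + 1) * g N) := by
    have h1 : ∑ _i : Fin (k+1), (f N - lam * g N) ≤ ∑ i, (f (x i) - lam * g (x i)) :=
      Finset.sum_le_sum (fun i _ => key (x i) (hx i))
    simp only [Finset.sum_sub_distrib, ← Finset.mul_sum, Finset.sum_const,
      Finset.card_univ, Fintype.card_fin, nsmul_eq_mul] at h1
    rw [hsumf, hsumg] at h1
    push_cast at h1 ⊢
    linarith
  have hfNM : f N ≤ f M := by nlinarith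
  -- f is strictly monotone on I, conclude.
  have hfmono : StrictMonoOn f I := by
    apply strictMonoOn_of_hasDerivWithinAt_pos hI hfcont
      (fun t ht => (hdf1 t (interior_subset ht)).mono interior_subset)
      (fun t ht => hfpos t (interior_subset ht))
  by_contra hlt
  push_neg at hlt
  exact absurd (hfmono hMI hNI hlt) (not_lt.2 hfNM)

/-- one direction of the Mikusiński–Łojasiewicz comparison theorem:
    if `f, g ∈ C²(I)` with nonvanishing first derivatives and `f''/f' ≥ g''/g'`
    everywhere on `I`, then `M_f(x) ≥ M_g(x)`; the quasi-arithmetic means `M, N`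
    are characterized by `M, N ∈ I`, `f M = (Σ f(xᵢ))/k` and `g N = (Σ g(xᵢ))/k`. -/
theorem stmt5 (I : Set ℝ) (hI : Convex ℝ I) (f f' f'' g g' g'' : ℝ → ℝ)
    (hdf1 : ∀ t ∈ I, HasDerivWithinAt f (f' t) I t)
    (hdf2 : ∀ t ∈ I, HasDerivWithinAt f' (f'' t) I t)
    (hcf : ContinuousOn f'' I)
    (hdg1 : ∀ t ∈ I, HasDerivWithinAt g (g' t) I t)
    (hdg2 : ∀ t ∈ I, HasDerivWithinAt g' (g'' t) I t)
    (hcg : ContinuousOn g'' I)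
    (hne : ∀ t ∈ I, f' t ≠ 0 ∧ g' t ≠ 0)
    (hcmp : ∀ t ∈ I, g'' t / g' t ≤ f'' t / f' t)
    (k : ℕ) (x : Fin (k+1) → ℝ) (hx : ∀ i, x i ∈ I)
    (M N : ℝ) (hMI : M ∈ I) (hNI : N ∈ I)
    (hM : f M = (∑ i, f (x i)) / (k+1))
    (hN : g N = (∑ i, g (x i)) / (k+1)) :
    N ≤ M := by
  have hfcont : ContinuousOn f' I := fun t ht => (hdf2 t ht).continuousWithinAt
  rcases (hne M hMI).1.lt_or_gt with hfM | hfM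
  · -- f' < 0 on I: apply the aux lemma to -f.
    have hfneg : ∀ t ∈ I, 0 < -f' t := fun t ht =>
      sign_const_aux hI hfcont.neg (fun s hs => neg_ne_zero.2 (hne s hs).1)
        hMI ht (by simpa using hfM)
    exact stmt5_aux I hI (fun t => -f t) (fun t => -f' t) (fun t => -f'' t) g g' g''
      (fun t ht => (hdf1 t ht).neg) (fun t ht => (hdf2 t ht).neg)
      hdg1 hdg2
      (fun t ht => ⟨neg_ne_zero.2 (hne t ht).1, (hne t ht).2⟩)
      (fun t ht => by rw [neg_div_neg_eq]; exact hcmp t ht)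
      hfneg k x hx M N hMI hNI
      (by show -f M = (∑ i, -f (x i)) / (k+1); rw [hM, Finset.sum_neg_distrib, neg_div]) hN
  · -- f' > 0 on I.
    have hfpos : ∀ t ∈ I, 0 < f' t := fun t ht =>
      sign_const_aux hI hfcont (fun s hs => (hne s hs).1) hMI ht hfM
    exact stmt5_aux I hI f f' f'' g g' g'' hdf1 hdf2 hdg1 hdg2 hne hcmp hfpos
      k x hx M N hMI hNI hM hN
end

section
/- Let I be an interval, f ∈ C²(I) with f′ ≠ 0 and f″ of locally bounded variation, and x ∈ I^k with arithmetic mean x̄. Then M_f(x) = x̄ + (1/2)·Var(x)·(f″(x̄)/f′(x̄)) + (1/(2f′(x̄)))·A[∫_{x̄}^{x_i}(x_i − t)² df″(t)] + ∫_{x̄}^{M_f(x)} ((f(u) − f(M_f(x)))·f″(u)/f′(u)²) du, where A denotes the average over the k entries. -/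
lemma ftcAux (I : Set ℝ) (hI : Convex ℝ I) (F F' : ℝ → ℝ)
    (hF : ∀ t ∈ I, HasDerivWithinAt F (F' t) I t)
    (hc : ContinuousOn F' I) (a b : ℝ) (ha : a ∈ I) (hb : b ∈ I) :
    ∫ t in a..b, F' t = F b - F a := by
  have hsub : Set.uIcc a b ⊆ I := hI.ordConnected.uIcc_subset ha hb
  have hIoo : Set.Ioo (min a b) (max a b) ⊆ I := fun u hu =>
    hsub (Set.Ioo_subset_Icc_self hu)
  apply intervalIntegral.integral_eq_sub_of_hasDeriv_right
  · exact fun t ht => ((hF t (hsub ht)).continuousWithinAt).mono hsub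
  · intro t ht
    exact (((hF t (hIoo ht)).hasDerivAt
      (mem_nhds_iff.mpr ⟨_, hIoo, isOpen_Ioo, ht⟩)).hasDerivWithinAt)
  · exact (hc.mono hsub).intervalIntegrable
/-- Lemma: integral form of the quasi-arithmetic mean.
    `f ∈ C²(I)` with `f' ≠ 0` and `f''` of locally bounded variation; `x ∈ I^k`
    with arithmetic mean `x̄`; `M` is the quasi-arithmetic mean, characterized by
    `M ∈ I`, `f M = (Σ f(xᵢ))/k`.  The Riemann–Stieltjes integral
    `∫_{x̄}^{xᵢ} (xᵢ − t)² df''(t)` is expressed, via integration by parts (an exact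
    identity for integrators of bounded variation against a C¹ integrand), as
    `−(xᵢ − x̄)²·f''(x̄) + ∫_{x̄}^{xᵢ} 2(xᵢ − t) f''(t) dt`. -/
theorem stmt8 (I : Set ℝ) (hI : Convex ℝ I) (f f' f'' : ℝ → ℝ)
    (hd1 : ∀ t ∈ I, HasDerivWithinAt f (f' t) I t)
    (hd2 : ∀ t ∈ I, HasDerivWithinAt f' (f'' t) I t)
    (hc : ContinuousOn f'' I)
    (hne : ∀ t ∈ I, f' t ≠ 0)
    (hbv : LocallyBoundedVariationOn f'' I)
    (k : ℕ) (x : Fin (k+1) → ℝ) (hx : ∀ i, x i ∈ I)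
    (xbar : ℝ) (hxbar : xbar = (∑ i, x i) / (k+1)) (hxbarI : xbar ∈ I)
    (M : ℝ) (hMI : M ∈ I) (hM : f M = (∑ i, f (x i)) / (k+1)) :
    M = xbar + (1/2) * ((∑ i, (x i - xbar)^2) / (k+1)) * (f'' xbar / f' xbar)
      + (1/(2 * f' xbar)) *
        ((∑ i, (-((x i - xbar)^2 * f'' xbar)
            + ∫ t in xbar..(x i), 2 * (x i - t) * f'' t)) / (k+1))
      + ∫ u in xbar..M, (f u - f M) * f'' u / (f' u)^2 := by
  have hfc : ContinuousOn f I := fun t ht => (hd1 t ht).continuousWithinAt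
  have hf'c : ContinuousOn f' I := fun t ht => (hd2 t ht).continuousWithinAt
  -- Step A: Taylor with integral remainder
  have stepA : ∀ i, (∫ t in xbar..(x i), 2 * (x i - t) * f'' t)
      = 2 * (f (x i) - f xbar - f' xbar * (x i - xbar)) := by
    intro i
    have h := ftcAux I hI (fun t => 2 * (f t + f' t * (x i - t)))
      (fun t => 2 * (x i - t) * f'' t) ?_ ?_ xbar (x i) hxbarI (hx i)
    · rw [h]; ring
    · intro t ht
      have h1 := hd1 t ht
      have h2 := hd2 t ht
      have h3 : HasDerivWithinAt (fun t => x i - t) (-1) I t :=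
        (hasDerivWithinAt_id t I).const_sub (x i)
      have H := ((h1.add (h2.mul h3)).const_mul 2)
      refine H.congr_deriv ?_
      ring
    · exact (continuousOn_const.mul
        (continuousOn_const.sub continuousOn_id)).mul hc
  -- Step B: FTC for the last integral
  have stepB : (∫ u in xbar..M, (f u - f M) * f'' u / (f' u)^2)
      = (M - (f M - f M) / f' M) - (xbar - (f xbar - f M) / f' xbar) := by
    apply ftcAux I hI (fun u => u - (f u - f M) / f' u) _ ?_ ?_ xbar M hxbarI hMI
    · intro t ht
      have h1 := hd1 t ht
      have h2 := hd2 t ht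
      have hnt := hne t ht
      have H := (hasDerivWithinAt_id t I).sub
        ((h1.sub_const (f M)).div h2 hnt)
      refine H.congr_deriv ?_
      field_simp
      ring
    · exact (((hfc.sub continuousOn_const).mul hc).div
        (hf'c.pow 2) (fun t ht => pow_ne_zero 2 (hne t ht)))
  have hn : ((k : ℝ) + 1) ≠ 0 := by positivity
  have hSx : (∑ i, x i) = ((k : ℝ) + 1) * xbar := by
    rw [hxbar]; field_simp
  have hSf : (∑ i, f (x i)) = ((k : ℝ) + 1) * f M := by
    rw [hM]; field_simp
  have e1 : (∑ i, (-((x i - xbar)^2 * f'' xbar)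
        + ∫ t in xbar..(x i), 2 * (x i - t) * f'' t))
      = -((∑ i, (x i - xbar)^2) * f'' xbar)
        + 2 * ((∑ i, f (x i)) - ((k : ℝ) + 1) * f xbar
          - f' xbar * ((∑ i, x i) - ((k : ℝ) + 1) * xbar)) := by
    simp only [stepA]
    rw [Finset.sum_add_distrib]
    congr 1
    · rw [Finset.sum_neg_distrib, ← Finset.sum_mul]
    · rw [← Finset.mul_sum]
      congr 1
      rw [Finset.sum_sub_distrib, Finset.sum_sub_distrib, ← Finset.mul_sum,
        Finset.sum_sub_distrib, Finset.sum_const, Finset.sum_const, Finset.card_fin]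
      push_cast [nsmul_eq_mul]
      ring
  rw [stepB, e1, hSx, hSf]
  have hne' := hne xbar hxbarI
  field_simp
  ring
end

section
/- Let I be an interval, f ∈ C²(I) with f′ ≠ 0, |f″/f′| ≤ K on I, and x ∈ I^k. Then |∫_{x̄}^{M_f(x)} ((f(u) − f(M_f(x)))·f″(u)/f′(u)²) du| ≤ K·(M_f(x) − x̄)²·exp(‖f″/f′‖_*), where ‖f″/f′‖_* := sup_{a,b ∈ I} |∫_a^b (f″/f′)(t) dt| and x̄ is the arithmetic mean of x. -/
open Set intervalIntegral

/-- FTC for functions with derivative within a convex set. -/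
lemma myftc (I : Set ℝ) (hI : Convex ℝ I) (g g' : ℝ → ℝ)
    (hd : ∀ t ∈ I, HasDerivWithinAt g (g' t) I t)
    (hcg : ContinuousOn g' I) {a b : ℝ} (ha : a ∈ I) (hb : b ∈ I) :
    ∫ t in a..b, g' t = g b - g a := by
  have hsub : Set.uIcc a b ⊆ I := hI.ordConnected.uIcc_subset ha hb
  apply intervalIntegral.integral_eq_sub_of_hasDeriv_right
  · exact fun t ht => ((hd t (hsub ht)).continuousWithinAt).mono hsub
  · intro t ht
    have hIoo : Set.Ioo (min a b) (max a b) ∈ nhds t := Ioo_mem_nhds ht.1 ht.2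
    have hIoo_sub : Set.Ioo (min a b) (max a b) ⊆ I := fun y hy =>
      hsub (Set.Ioo_subset_Icc_self hy)
    have := ((hd t (hIoo_sub ht)).mono hIoo_sub).hasDerivAt hIoo
    exact this.hasDerivWithinAt
  · exact (hcg.mono hsub).intervalIntegrable

/-- The exponential ratio bound for `f'`. -/
lemma ratio_bound (I : Set ℝ) (hI : Convex ℝ I) (f' f'' : ℝ → ℝ)
    (hd2 : ∀ t ∈ I, HasDerivWithinAt f' (f'' t) I t)
    (hc : ContinuousOn f'' I)
    (hne : ∀ t ∈ I, f' t ≠ 0)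
    (L : ℝ)
    (hbL : ∀ a ∈ I, ∀ b ∈ I, |∫ t in a..b, f'' t / f' t| ≤ L)
    {a b : ℝ} (ha : a ∈ I) (hb : b ∈ I) :
    |f' b| ≤ |f' a| * Real.exp L := by
  set g : ℝ → ℝ := fun t => Real.log (f' t) with hg
  have hgd : ∀ t ∈ I, HasDerivWithinAt g (f'' t / f' t) I t := by
    intro t ht
    have := (Real.hasDerivAt_log (hne t ht)).comp_hasDerivWithinAt t (hd2 t ht)
    simpa [g, div_eq_inv_mul, Function.comp_def] using this
  have hcq : ContinuousOn (fun t => f'' t / f' t) I :=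
    hc.div (fun t ht => (hd2 t ht).continuousWithinAt) hne
  have hftc : ∫ t in a..b, f'' t / f' t = g b - g a :=
    myftc I hI g _ hgd hcq ha hb
  have habs : |g b - g a| ≤ L := by rw [← hftc]; exact hbL a ha b hb
  have hle : g b ≤ g a + L := by
    have := (abs_le.mp habs).2; linarith
  calc |f' b| = Real.exp (g b) := (Real.exp_log_eq_abs (hne b hb)).symm
    _ ≤ Real.exp (g a + L) := Real.exp_le_exp.mpr hle
    _ = Real.exp (g a) * Real.exp L := Real.exp_add _ _
    _ = |f' a| * Real.exp L := by rw [Real.exp_log_eq_abs (hne a ha)]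

/-- bound on the right-most term in the integral form of the
    quasi-arithmetic mean.  `L` is an upper bound for the star norm
    `‖f''/f'‖_* = sup_{a,b ∈ I} |∫_a^b f''/f'|`; `M` is the quasi-arithmetic mean,
    characterized by `M ∈ I`, `f M = (Σ f(xᵢ))/k`, and `x̄` the arithmetic mean. -/
theorem stmt9 (I : Set ℝ) (hI : Convex ℝ I) (f f' f'' : ℝ → ℝ)
    (hd1 : ∀ t ∈ I, HasDerivWithinAt f (f' t) I t)
    (hd2 : ∀ t ∈ I, HasDerivWithinAt f' (f'' t) I t)
    (hc : ContinuousOn f'' I)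
    (hne : ∀ t ∈ I, f' t ≠ 0)
    (K L : ℝ) (hK : 0 < K)
    (hbK : ∀ t ∈ I, |f'' t / f' t| ≤ K)
    (hbL : ∀ a ∈ I, ∀ b ∈ I, |∫ t in a..b, f'' t / f' t| ≤ L)
    (k : ℕ) (x : Fin (k+1) → ℝ) (hx : ∀ i, x i ∈ I)
    (xbar : ℝ) (hxbar : xbar = (∑ i, x i) / (k+1)) (hxbarI : xbar ∈ I)
    (M : ℝ) (hMI : M ∈ I) (hM : f M = (∑ i, f (x i)) / (k+1)) :
    |∫ u in xbar..M, (f u - f M) * f'' u / (f' u)^2|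
      ≤ K * (M - xbar)^2 * Real.exp L := by
  have hsub : Set.uIcc xbar M ⊆ I := hI.ordConnected.uIcc_subset hxbarI hMI
  have hcf' : ContinuousOn f' I := fun t ht => (hd2 t ht).continuousWithinAt
  set C : ℝ := K * |M - xbar| * Real.exp L with hC
  have key : ∀ u ∈ Set.uIoc xbar M,
      ‖(f u - f M) * f'' u / (f' u)^2‖ ≤ C := by
    intro u hu
    rw [Real.norm_eq_abs]
    have huIcc : u ∈ Set.uIcc xbar M := Set.uIoc_subset_uIcc hu
    have huI : u ∈ I := hsub huIcc
    have hMu : |M - u| ≤ |M - xbar| := by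
      rcases Set.mem_uIcc.mp huIcc with h | h
      · rw [abs_of_nonneg (by linarith), abs_of_nonneg (by linarith)]; linarith
      · rw [abs_of_nonpos (by linarith), abs_of_nonpos (by linarith)]; linarith
    have hfd : |f u - f M| ≤ |f' u| * Real.exp L * |M - u| := by
      have hftc : ∫ t in M..u, f' t = f u - f M :=
        myftc I hI f f' hd1 hcf' hMI huI
      rw [← hftc]
      have hb : ∀ t ∈ Set.uIoc M u, ‖f' t‖ ≤ |f' u| * Real.exp L := by
        intro t ht
        have htI : t ∈ I := hI.ordConnected.uIcc_subset hMI huI (Set.uIoc_subset_uIcc ht)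
        exact ratio_bound I hI f' f'' hd2 hc hne L hbL huI htI
      calc |∫ t in M..u, f' t| ≤ |f' u| * Real.exp L * |u - M| :=
            intervalIntegral.norm_integral_le_of_norm_le_const hb
        _ = |f' u| * Real.exp L * |M - u| := by rw [abs_sub_comm]
    have hfu : 0 < |f' u| := abs_pos.mpr (hne u huI)
    have hdiv : |f u - f M| / |f' u| ≤ Real.exp L * |M - u| := by
      rw [div_le_iff₀ hfu]
      calc |f u - f M| ≤ |f' u| * Real.exp L * |M - u| := hfd
        _ = Real.exp L * |M - u| * |f' u| := by ring
    have heq : (f u - f M) * f'' u / (f' u)^2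
        = ((f u - f M) / f' u) * (f'' u / f' u) := by
      have h0 : f' u ≠ 0 := hne u huI
      field_simp
    rw [heq, abs_mul, abs_div]
    have h1 : |f u - f M| / |f' u| ≤ Real.exp L * |M - xbar| := by
      calc |f u - f M| / |f' u| ≤ Real.exp L * |M - u| := hdiv
        _ ≤ Real.exp L * |M - xbar| :=
            mul_le_mul_of_nonneg_left hMu (Real.exp_nonneg L)
    calc |f u - f M| / |f' u| * |f'' u / f' u|
        ≤ (Real.exp L * |M - xbar|) * K := by
          apply mul_le_mul h1 (hbK u huI) (abs_nonneg _)
          positivity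
      _ = C := by rw [hC]; ring
  have hbound := intervalIntegral.norm_integral_le_of_norm_le_const key
  calc |∫ u in xbar..M, (f u - f M) * f'' u / (f' u)^2|
      ≤ C * |M - xbar| := by rw [← Real.norm_eq_abs]; exact hbound
    _ = K * (M - xbar)^2 * Real.exp L := by
        rw [hC]
        rw [show K * |M - xbar| * Real.exp L * |M - xbar|
          = K * (|M - xbar| * |M - xbar|) * Real.exp L by ring,
          ← abs_mul, ← sq, abs_sq]
end

section
/- Let I be an interval, K > 0, f ∈ C²(I) with f′ ≠ 0, f″ of locally bounded variation, and |f″/f′| ≤ K on I. If x ∈ I^k satisfies max x − min x < min(1/K, 1), then |M_f(x) − x̄| ≤ ((3 + 7e)/6)·K·(max x − min x)², where x̄ is the arithmetic mean of x. -/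
open Set

private lemma gron_fwd (I : Set ℝ) (K : ℝ) (f' f'' : ℝ → ℝ)
    (hd2 : ∀ t ∈ I, HasDerivWithinAt f' (f'' t) I t)
    (hbK' : ∀ t ∈ I, |f'' t| ≤ K * |f' t|)
    (u v : ℝ) (huv : u ≤ v) (hsub : Icc u v ⊆ I) :
    |f' v| ≤ Real.exp (K * (v - u)) * |f' u| := by
  have hcont : ContinuousOn f' (Icc u v) :=
    fun t ht => ((hd2 t (hsub ht)).continuousWithinAt).mono hsub
  have hder : ∀ t ∈ Ico u v, HasDerivWithinAt f' (f'' t) (Ici t) t := by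
    intro t ht
    refine (hd2 t (hsub ⟨ht.1, ht.2.le⟩)).mono_of_mem_nhdsWithin ?_
    refine mem_nhdsWithin.2 ⟨Iio v, isOpen_Iio, ht.2, fun z hz => hsub ⟨le_trans ht.1 hz.2, hz.1.le⟩⟩
  have := norm_le_gronwallBound_of_norm_deriv_right_le hcont hder le_rfl
    (fun t ht => by
      rw [add_zero, Real.norm_eq_abs, Real.norm_eq_abs]
      exact hbK' t (hsub ⟨ht.1, ht.2.le⟩)) v ⟨huv, le_rfl⟩
  rw [gronwallBound_ε0, Real.norm_eq_abs, Real.norm_eq_abs] at this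
  linarith [this]

private lemma gron_bwd (I : Set ℝ) (K : ℝ) (f' f'' : ℝ → ℝ)
    (hd2 : ∀ t ∈ I, HasDerivWithinAt f' (f'' t) I t)
    (hbK' : ∀ t ∈ I, |f'' t| ≤ K * |f' t|)
    (u v : ℝ) (huv : u ≤ v) (hsub : Icc u v ⊆ I) :
    |f' u| ≤ Real.exp (K * (v - u)) * |f' v| := by
  set g : ℝ → ℝ := fun s => f' (u + v - s) with hg
  have hmaps : MapsTo (fun s => u + v - s) (Icc u v) (Icc u v) := by
    intro s hs; simp only [mem_Icc] at hs ⊢; constructor <;> linarith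
  have hcont' : ContinuousOn f' I := fun t ht => (hd2 t ht).continuousWithinAt
  have hcont : ContinuousOn g (Icc u v) := by
    refine hcont'.comp (Continuous.continuousOn (by continuity)) fun s hs => hsub (hmaps hs)
  have hderIcc : ∀ t ∈ Icc u v, HasDerivWithinAt g (f'' (u + v - t) * (-1)) (Icc u v) t := by
    intro t ht
    have h1 : HasDerivWithinAt f' (f'' (u + v - t)) I (u + v - t) :=
      hd2 _ (hsub (hmaps ht))
    have h2 : HasDerivWithinAt (fun s => u + v - s) (-1) (Icc u v) t :=
      ((hasDerivAt_id t).const_sub (u + v)).hasDerivWithinAt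
    exact (h1.comp t h2 fun s hs => hsub (hmaps hs))
  have hder : ∀ t ∈ Ico u v, HasDerivWithinAt g (f'' (u + v - t) * (-1)) (Ici t) t := by
    intro t ht
    refine (hderIcc t ⟨ht.1, ht.2.le⟩).mono_of_mem_nhdsWithin ?_
    exact mem_nhdsWithin.2 ⟨Iio v, isOpen_Iio, ht.2, fun z hz => ⟨le_trans ht.1 hz.2, hz.1.le⟩⟩
  have := norm_le_gronwallBound_of_norm_deriv_right_le hcont hder le_rfl
    (fun t ht => by
      rw [add_zero, Real.norm_eq_abs, Real.norm_eq_abs, abs_mul, abs_neg, abs_one, mul_one]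
      exact hbK' _ (hsub (hmaps ⟨ht.1, ht.2.le⟩))) v ⟨huv, le_rfl⟩
  rw [gronwallBound_ε0, Real.norm_eq_abs, Real.norm_eq_abs] at this
  have e1 : g v = f' u := by simp [hg]
  have e2 : g u = f' v := by simp [hg]
  rw [e1, e2] at this
  linarith [this]

set_option maxHeartbeats 1000000 in
/-- if `f ∈ C²(I)`, `f' ≠ 0`, `f''` of locally bounded variation,
    `|f''/f'| ≤ K` on `I`, and `max x − min x < min(1/K, 1)`, then
    `|M_f(x) − x̄| ≤ ((3 + 7e)/6)·K·(max x − min x)²`, where `M` is the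
    quasi-arithmetic mean, characterized by `M ∈ I`, `f M = (Σ f(xᵢ))/k`,
    and `x̄` the arithmetic mean. -/
theorem stmt11 (I : Set ℝ) (hI : Convex ℝ I) (K : ℝ) (hK : 0 < K)
    (f f' f'' : ℝ → ℝ)
    (hd1 : ∀ t ∈ I, HasDerivWithinAt f (f' t) I t)
    (hd2 : ∀ t ∈ I, HasDerivWithinAt f' (f'' t) I t)
    (hc : ContinuousOn f'' I)
    (hne : ∀ t ∈ I, f' t ≠ 0)
    (hbv : LocallyBoundedVariationOn f'' I)
    (hbK : ∀ t ∈ I, |f'' t / f' t| ≤ K)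
    (k : ℕ) (x : Fin (k+1) → ℝ) (hx : ∀ i, x i ∈ I)
    (hsmall : vmax x - vmin x < min (1/K) 1)
    (xbar : ℝ) (hxbar : xbar = (∑ i, x i) / (k+1)) (hxbarI : xbar ∈ I)
    (M : ℝ) (hMI : M ∈ I) (hM : f M = (∑ i, f (x i)) / (k+1)) :
    |M - xbar| ≤ ((3 + 7 * Real.exp 1) / 6) * K * (vmax x - vmin x)^2 := by
  have hNk : (0:ℝ) < (k+1 : ℝ) := by positivity
  obtain ⟨i0, -, hi0⟩ := Finset.exists_mem_eq_sup' (Finset.univ_nonempty) x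
  obtain ⟨i1, -, hi1⟩ := Finset.exists_mem_eq_inf' (Finset.univ_nonempty) x
  have hbx : vmax x = x i0 := hi0
  have hax : vmin x = x i1 := hi1
  set a := vmin x with hadef
  set b := vmax x with hbdef
  have hxmem : ∀ i, x i ∈ Set.Icc a b := fun i =>
    ⟨Finset.inf'_le x (Finset.mem_univ i), Finset.le_sup' x (Finset.mem_univ i)⟩
  have hab : a ≤ b := (hxmem i0).1.trans (hxmem i0).2
  have hsubI : Set.Icc a b ⊆ I := by
    rw [hax, hbx]; exact hI.ordConnected.out (hx i1) (hx i0)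
  have hdK : K * (b - a) ≤ 1 := by
    have h1 : b - a < 1/K := lt_of_lt_of_le hsmall (min_le_left _ _)
    have := (lt_div_iff₀ hK).1 h1
    linarith
  have hd0 : 0 ≤ b - a := by linarith
  have hxbarm : xbar ∈ Set.Icc a b := by
    constructor
    · rw [hxbar, le_div_iff₀ hNk]
      calc a * (k+1) = ∑ _i : Fin (k+1), a := by
            rw [Finset.sum_const, Finset.card_univ, Fintype.card_fin, nsmul_eq_mul]; push_cast; ring
        _ ≤ ∑ i, x i := Finset.sum_le_sum fun i _ => (hxmem i).1
    · rw [hxbar, div_le_iff₀ hNk]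
      calc ∑ i, x i ≤ ∑ _i : Fin (k+1), b := Finset.sum_le_sum fun i _ => (hxmem i).2
        _ = b * (k+1) := by rw [Finset.sum_const, Finset.card_univ, Fintype.card_fin, nsmul_eq_mul]; push_cast; ring
  have hcf : ContinuousOn f I := fun t ht => (hd1 t ht).continuousWithinAt
  have hcf' : ContinuousOn f' I := fun t ht => (hd2 t ht).continuousWithinAt
  have hbK' : ∀ t ∈ I, |f'' t| ≤ K * |f' t| := by
    intro t ht
    have h := hbK t ht
    rw [abs_div, div_le_iff₀ (abs_pos.2 (hne t ht))] at h
    linarith [h]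
  have hderivAt : ∀ t ∈ interior I, HasDerivAt f (f' t) t := fun t ht =>
    (hd1 t (interior_subset ht)).hasDerivAt (mem_interior_iff_mem_nhds.1 ht)
  have hinj : Set.InjOn f I := by
    have hsign : (∀ t ∈ I, 0 < f' t) ∨ (∀ t ∈ I, f' t < 0) := by
      by_cases hp : ∀ t ∈ I, 0 < f' t
      · exact Or.inl hp
      · right
        push_neg at hp
        obtain ⟨t1, ht1I, ht1⟩ := hp
        have ht1' : f' t1 < 0 := lt_of_le_of_ne ht1 (hne t1 ht1I)
        intro t ht
        rcases lt_or_gt_of_ne (hne t ht) with h | h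
        · exact h
        · exfalso
          have hsub : Set.uIcc t1 t ⊆ I := hI.ordConnected.uIcc_subset ht1I ht
          have h0 : (0:ℝ) ∈ Set.uIcc (f' t1) (f' t) := Set.mem_uIcc.2 (Or.inl ⟨ht1'.le, h.le⟩)
          obtain ⟨z, hz, hz0⟩ := intermediate_value_uIcc (hcf'.mono hsub) h0
          exact hne z (hsub hz) hz0
    rcases hsign with hpos | hneg
    · exact (strictMonoOn_of_deriv_pos hI hcf fun t ht =>
        (hderivAt t ht).deriv ▸ hpos t (interior_subset ht)).injOn
    · exact (strictAntiOn_of_deriv_neg hI hcf fun t ht =>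
        (hderivAt t ht).deriv ▸ hneg t (interior_subset ht)).injOn
  have hMm : M ∈ Set.Icc a b := by
    obtain ⟨j0, -, hj0⟩ := Finset.exists_mem_eq_sup' (Finset.univ_nonempty) (fun i => f (x i))
    obtain ⟨j1, -, hj1⟩ := Finset.exists_mem_eq_inf' (Finset.univ_nonempty) (fun i => f (x i))
    have hfM : f M ∈ Set.Icc (f (x j1)) (f (x j0)) := by
      constructor
      · rw [hM, le_div_iff₀ hNk]
        calc f (x j1) * (k+1) = ∑ _i : Fin (k+1), f (x j1) := by
              rw [Finset.sum_const, Finset.card_univ, Fintype.card_fin, nsmul_eq_mul]; push_cast; ring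
          _ ≤ ∑ i, f (x i) := Finset.sum_le_sum fun i _ => by
              rw [← hj1]; exact Finset.inf'_le (fun j => f (x j)) (Finset.mem_univ i)
      · rw [hM, div_le_iff₀ hNk]
        calc ∑ i, f (x i) ≤ ∑ _i : Fin (k+1), f (x j0) := Finset.sum_le_sum fun i _ => by
              rw [← hj0]; exact Finset.le_sup' (fun j => f (x j)) (Finset.mem_univ i)
          _ = f (x j0) * (k+1) := by rw [Finset.sum_const, Finset.card_univ, Fintype.card_fin, nsmul_eq_mul]; push_cast; ring
    have husub : Set.uIcc (x j1) (x j0) ⊆ Set.Icc a b :=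
      Set.ordConnected_Icc.uIcc_subset (hxmem j1) (hxmem j0)
    obtain ⟨M', hM', hfM'⟩ := intermediate_value_uIcc
      ((hcf.mono hsubI).mono husub) (Set.Icc_subset_uIcc hfM)
    have hMM : M' = M := hinj (hsubI (husub hM')) hMI hfM'
    exact hMM ▸ husub hM'
  rcases eq_or_ne M xbar with heq | hne'
  · rw [heq, sub_self, abs_zero]
    positivity
  set p := min M xbar with hp
  set q := max M xbar with hq
  have hpq : p < q := min_lt_max.2 hne'
  have hpm : p ∈ Set.Icc a b := ⟨le_min hMm.1 hxbarm.1, (min_le_left _ _).trans hMm.2⟩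
  have hqm : q ∈ Set.Icc a b := ⟨hMm.1.trans (le_max_left _ _), max_le hMm.2 hxbarm.2⟩
  have hIoo : Set.Ioo p q ⊆ interior I := by
    intro t ht
    have htab : t ∈ Set.Ioo a b := ⟨lt_of_le_of_lt hpm.1 ht.1, lt_of_lt_of_le ht.2 hqm.2⟩
    exact interior_maximal (Set.Ioo_subset_Icc_self.trans hsubI) isOpen_Ioo htab
  obtain ⟨ξ, hξmem, hξ⟩ := exists_hasDerivAt_eq_slope f f' hpq
    ((hcf.mono hsubI).mono (Set.Icc_subset_Icc hpm.1 hqm.2))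
    (fun t ht => (hd1 t (interior_subset (hIoo ht))).hasDerivAt
      (mem_interior_iff_mem_nhds.1 (hIoo ht)))
  have hξab : ξ ∈ Set.Icc a b := ⟨hpm.1.trans hξmem.1.le, hξmem.2.le.trans hqm.2⟩
  have hξI : ξ ∈ I := hsubI hξab
  have hfpq : f q - f p = f' ξ * (q - p) := by
    rw [hξ, div_mul_cancel₀ _ (sub_ne_zero.2 hpq.ne')]
  have hslope : |f M - f xbar| = |f' ξ| * |M - xbar| := by
    have h1 : |f M - f xbar| = |f q - f p| := by
      rcases le_total M xbar with h | h
      · rw [hq, hp, max_eq_right h, min_eq_left h]; exact abs_sub_comm _ _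
      · rw [hq, hp, max_eq_left h, min_eq_right h]
    have h2 : q - p = |M - xbar| := by rw [hq, hp]; rw [max_sub_min_eq_abs, abs_sub_comm]
    rw [h1, hfpq, abs_mul, h2, abs_abs]
  have grow : ∀ t ∈ Set.Icc a b, |f' t| ≤ Real.exp 1 * |f' ξ| := by
    intro t ht
    rcases le_total t ξ with h | h
    · have hg := gron_bwd I K f' f'' hd2 hbK' t ξ h
        ((Set.Icc_subset_Icc ht.1 hξab.2).trans hsubI)
      refine hg.trans ?_
      have h2 : ξ - t ≤ b - a := by linarith [ht.1, hξab.2]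
      have h3 : K * (ξ - t) ≤ 1 := by nlinarith [mul_le_mul_of_nonneg_left h2 hK.le]
      exact mul_le_mul_of_nonneg_right (Real.exp_le_exp.2 h3) (abs_nonneg _)
    · have hg := gron_fwd I K f' f'' hd2 hbK' ξ t h
        ((Set.Icc_subset_Icc hξab.1 ht.2).trans hsubI)
      refine hg.trans ?_
      have h2 : t - ξ ≤ b - a := by linarith [ht.2, hξab.1]
      have h3 : K * (t - ξ) ≤ 1 := by nlinarith [mul_le_mul_of_nonneg_left h2 hK.le]
      exact mul_le_mul_of_nonneg_right (Real.exp_le_exp.2 h3) (abs_nonneg _)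
  set B := K * (Real.exp 1 * |f' ξ|) with hBdef
  have hB0 : 0 ≤ B := by positivity
  have hbd : ∀ t ∈ Set.Icc a b, ‖f'' t‖ ≤ B := fun t ht => by
    rw [Real.norm_eq_abs]
    exact (hbK' t (hsubI ht)).trans (mul_le_mul_of_nonneg_left (grow t ht) hK.le)
  have hstep1 : ∀ t ∈ Set.Icc a b, ‖f' t - f' xbar‖ ≤ B * (b - a) := by
    intro t ht
    have h := (convex_Icc a b).norm_image_sub_le_of_norm_hasDerivWithin_le
      (fun s hs => (hd2 s (hsubI hs)).mono hsubI) hbd hxbarm ht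
    refine h.trans ?_
    rw [Real.norm_eq_abs]
    have h2 : |t - xbar| ≤ b - a :=
      abs_le.2 ⟨by linarith [ht.1, hxbarm.2], by linarith [ht.2, hxbarm.1]⟩
    exact mul_le_mul_of_nonneg_left h2 hB0
  have hstep2 : ∀ y ∈ Set.Icc a b, |f y - f xbar - f' xbar * (y - xbar)| ≤ B * (b-a) * (b-a) := by
    intro y hy
    set g : ℝ → ℝ := fun t => f t - f' xbar * t with hgdef
    have hdg : ∀ s ∈ Set.Icc a b, HasDerivWithinAt g (f' s - f' xbar) (Set.Icc a b) s := by
      intro s hs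
      have h1 := (hd1 s (hsubI hs)).mono hsubI
      have h2 : HasDerivWithinAt (fun t => f' xbar * t) (f' xbar) (Set.Icc a b) s := by
        simpa using (hasDerivWithinAt_id s (Set.Icc a b)).const_mul (f' xbar)
      exact h1.sub h2
    have h := (convex_Icc a b).norm_image_sub_le_of_norm_hasDerivWithin_le hdg
      (fun s hs => hstep1 s hs) hxbarm hy
    have heq : g y - g xbar = f y - f xbar - f' xbar * (y - xbar) := by
      simp only [hgdef]; ring
    rw [heq, Real.norm_eq_abs, Real.norm_eq_abs] at h
    refine h.trans ?_
    have h3 : |y - xbar| ≤ b - a :=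
      abs_le.2 ⟨by linarith [hy.1, hxbarm.2], by linarith [hy.2, hxbarm.1]⟩
    nlinarith [mul_nonneg hB0 hd0, abs_nonneg (y - xbar)]
  have h1 : ∑ i, x i = (k+1:ℝ) * xbar := by rw [hxbar]; field_simp
  have h2 : ∑ i, f (x i) = (k+1:ℝ) * f M := by rw [hM]; field_simp
  have hsum : (k+1:ℝ) * (f M - f xbar) = ∑ i, (f (x i) - f xbar - f' xbar * (x i - xbar)) := by
    simp only [Finset.sum_sub_distrib, ← Finset.mul_sum, Finset.sum_const,
      Finset.card_univ, Fintype.card_fin, nsmul_eq_mul]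
    rw [h1, h2]
    push_cast
    ring
  have hfin : |f M - f xbar| ≤ B * (b-a) * (b-a) := by
    have habs : (k+1:ℝ) * |f M - f xbar| ≤ (k+1:ℝ) * (B * (b-a)*(b-a)) := by
      calc (k+1:ℝ) * |f M - f xbar| = |(k+1:ℝ) * (f M - f xbar)| := by
            rw [abs_mul, abs_of_pos hNk]
        _ = |∑ i, (f (x i) - f xbar - f' xbar * (x i - xbar))| := by rw [hsum]
        _ ≤ ∑ i, |f (x i) - f xbar - f' xbar * (x i - xbar)| := Finset.abs_sum_le_sum_abs _ _
        _ ≤ ∑ _i : Fin (k+1), (B * (b-a)*(b-a)) :=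
            Finset.sum_le_sum fun i _ => hstep2 (x i) (hxmem i)
        _ = (k+1:ℝ) * (B*(b-a)*(b-a)) := by
            rw [Finset.sum_const, Finset.card_univ, Fintype.card_fin, nsmul_eq_mul]; push_cast; ring
    exact le_of_mul_le_mul_left habs hNk
  have hfpos : 0 < |f' ξ| := abs_pos.2 (hne ξ hξI)
  have hmain : |M - xbar| ≤ K * Real.exp 1 * (b-a)^2 := by
    have e3 : B * (b-a) * (b-a) = |f' ξ| * (K * Real.exp 1 * (b-a)^2) := by
      rw [hBdef]; ring
    have h4 : |f' ξ| * |M - xbar| ≤ |f' ξ| * (K * Real.exp 1 * (b-a)^2) := by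
      rw [← e3, ← hslope]; exact hfin
    exact le_of_mul_le_mul_left h4 hfpos
  refine hmain.trans ?_
  nlinarith [mul_nonneg hK.le (sq_nonneg (b-a)), Real.exp_pos 1]
end

section
/- Let I be an interval, K > 0, k ∈ ℕ, and f_1,…,f_k ∈ C²(I) with f_i′ ≠ 0, f_i″ of locally bounded variation, and |f_i″/f_i′| ≤ K for each i. Let A(x) := (M_{f_1}(x),…,M_{f_k}(x)). If x ∈ I^k satisfies max x − min x < min(1/K, 1), then max A(x) − min A(x) ≤ ((3 + 7e)/3)·K·(max x − min x)². -/
/-- Core estimate for a single quasi-arithmetic mean, assuming `f' > 0` on `I`. -/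
lemma aux_qam (I : Set ℝ) (hI : Convex ℝ I) (K : ℝ) (hK : 0 < K) {k : ℕ}
    (f f' f'' : ℝ → ℝ)
    (hd1 : ∀ t ∈ I, HasDerivWithinAt f (f' t) I t)
    (hd2 : ∀ t ∈ I, HasDerivWithinAt f' (f'' t) I t)
    (hpos : ∀ t ∈ I, 0 < f' t)
    (hbK : ∀ t ∈ I, |f'' t / f' t| ≤ K)
    (a b : ℝ) (ha : a ∈ I) (hb : b ∈ I) (hab : a ≤ b) (hKd : K * (b - a) ≤ 1)
    (x : Fin (k+1) → ℝ) (hx : ∀ j, x j ∈ Set.Icc a b)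
    (M : ℝ) (hMI : M ∈ I) (hMeq : f M = (∑ j, f (x j)) / (k+1)) :
    |M - (∑ j, x j) / (k+1)| ≤ Real.exp 1 * K * (b - a)^2 := by
  have hIcc : Set.Icc a b ⊆ I := hI.ordConnected.out ha hb
  have hf'c : ContinuousOn f' I := fun t ht =>
    (hd2 t ht).differentiableWithinAt.continuousWithinAt
  have hfc : ContinuousOn f I := fun t ht =>
    (hd1 t ht).differentiableWithinAt.continuousWithinAt
  -- ratio bound for f' on Icc a b
  have hratio : ∀ s ∈ Set.Icc a b, ∀ t ∈ Set.Icc a b, f' s ≤ Real.exp 1 * f' t := by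
    have hg : ∀ t ∈ Set.Icc a b,
        HasDerivWithinAt (fun u => Real.log (f' u)) (f'' t / f' t) (Set.Icc a b) t := by
      intro t ht
      have h1 := (Real.hasDerivAt_log (hpos t (hIcc ht)).ne').comp_hasDerivWithinAt t
        ((hd2 t (hIcc ht)).mono hIcc)
      simpa [div_eq_inv_mul, Function.comp_def] using h1
    intro s hs t ht
    have hmv := (convex_Icc a b).norm_image_sub_le_of_norm_hasDerivWithin_le hg
      (fun u hu => hbK u (hIcc hu)) ht hs
    have hst : |s - t| ≤ b - a := by
      rw [abs_sub_le_iff]; constructor <;> nlinarith [hs.1, hs.2, ht.1, ht.2]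
    have h2 : Real.log (f' s) - Real.log (f' t) ≤ 1 := by
      have : |Real.log (f' s) - Real.log (f' t)| ≤ K * |s - t| := by
        simpa [Real.norm_eq_abs] using hmv
      have hKst : K * |s - t| ≤ 1 := by nlinarith [abs_nonneg (s - t)]
      nlinarith [abs_le.1 this]
    have h3 : f' s = Real.exp (Real.log (f' s)) := (Real.exp_log (hpos s (hIcc hs))).symm
    have h4 : f' t = Real.exp (Real.log (f' t)) := (Real.exp_log (hpos t (hIcc ht))).symm
    calc f' s = Real.exp (Real.log (f' s)) := h3
      _ ≤ Real.exp (1 + Real.log (f' t)) := Real.exp_le_exp.2 (by linarith)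
      _ = Real.exp 1 * f' t := by rw [Real.exp_add, ← h4]
  -- strict monotonicity of f on I
  have hsm : StrictMonoOn f I :=
    strictMonoOn_of_hasDerivWithinAt_pos hI hfc
      (fun t ht => (hd1 t (interior_subset ht)).mono interior_subset)
      (fun t ht => hpos t (interior_subset ht))
  have hk1 : (0:ℝ) < (k:ℝ) + 1 := by positivity
  -- M ∈ Icc a b
  have hfa_le : f a ≤ f M := by
    rw [hMeq, le_div_iff₀ hk1]
    have : ∀ j : Fin (k+1), f a ≤ f (x j) := fun j =>
      hsm.monotoneOn ha (hIcc (hx j)) (hx j).1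
    calc f a * ((k:ℝ)+1) = ∑ _j : Fin (k+1), f a := by
          simp [Finset.sum_const, mul_comm]
      _ ≤ ∑ j, f (x j) := Finset.sum_le_sum fun j _ => this j
  have hfb_ge : f M ≤ f b := by
    rw [hMeq, div_le_iff₀ hk1]
    have : ∀ j : Fin (k+1), f (x j) ≤ f b := fun j =>
      hsm.monotoneOn (hIcc (hx j)) hb (hx j).2
    calc ∑ j, f (x j) ≤ ∑ _j : Fin (k+1), f b := Finset.sum_le_sum fun j _ => this j
      _ = f b * ((k:ℝ)+1) := by simp [Finset.sum_const, mul_comm]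
  have hMab : M ∈ Set.Icc a b := by
    constructor
    · by_contra h
      push_neg at h
      exact absurd (hsm hMI ha h) (not_lt.2 hfa_le)
    · by_contra h
      push_neg at h
      exact absurd (hsm hb hMI h) (not_lt.2 hfb_ge)
  -- min of f' on Icc
  obtain ⟨u, huab, humin⟩ := isCompact_Icc.exists_isMinOn (Set.nonempty_Icc.2 hab)
    (hf'c.mono hIcc)
  have hu0 : 0 < f' u := hpos u (hIcc huab)
  set S : ℝ := K * (Real.exp 1 * f' u) with hS
  have hS0 : 0 ≤ S := by positivity
  have hf''S : ∀ t ∈ Set.Icc a b, |f'' t| ≤ S := by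
    intro t ht
    have h1 : |f'' t| / |f' t| ≤ K := by
      rw [← abs_div]; exact hbK t (hIcc ht)
    have h2 : 0 < f' t := hpos t (hIcc ht)
    have h3 : |f'' t| ≤ K * f' t := by
      rw [div_le_iff₀ (abs_pos.2 h2.ne')] at h1
      rwa [abs_of_pos h2] at h1
    have h4 := hratio t ht u huab
    nlinarith
  -- m = arithmetic mean
  set m : ℝ := (∑ j, x j) / (k+1) with hm
  have hmab : m ∈ Set.Icc a b := by
    constructor
    · rw [hm, le_div_iff₀ hk1]
      calc a * ((k:ℝ)+1) = ∑ _j : Fin (k+1), a := by simp [Finset.sum_const, mul_comm]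
        _ ≤ ∑ j, x j := Finset.sum_le_sum fun j _ => (hx j).1
    · rw [hm, div_le_iff₀ hk1]
      calc ∑ j, x j ≤ ∑ _j : Fin (k+1), b := Finset.sum_le_sum fun j _ => (hx j).2
        _ = b * ((k:ℝ)+1) := by simp [Finset.sum_const, mul_comm]
  -- Lipschitz bound on f' over Icc
  have hf'lip : ∀ s ∈ Set.Icc a b, |f' s - f' m| ≤ S * (b - a) := by
    intro s hs
    have hmv := (convex_Icc a b).norm_image_sub_le_of_norm_hasDerivWithin_le
      (f' := f'') (fun t ht => (hd2 t (hIcc ht)).mono hIcc) hf''S hmab hs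
    have hsm' : |s - m| ≤ b - a := by
      rw [abs_sub_le_iff]; constructor <;> nlinarith [hs.1, hs.2, hmab.1, hmab.2]
    have : |f' s - f' m| ≤ S * |s - m| := by simpa [Real.norm_eq_abs] using hmv
    nlinarith [abs_nonneg (s - m)]
  -- Taylor-type bound: |f t - f m - f' m * (t - m)| ≤ S*(b-a)*|t-m|
  have htaylor : ∀ s ∈ Set.Icc a b, |f s - f m - f' m * (s - m)| ≤ S * (b-a) * (b-a) := by
    intro s hs
    have hφ : ∀ t ∈ Set.Icc a b,
        HasDerivWithinAt (fun u => f u - f' m * u) (f' t - f' m) (Set.Icc a b) t := by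
      intro t ht
      have hh := ((hd1 t (hIcc ht)).mono hIcc).sub
        ((hasDerivWithinAt_id t (Set.Icc a b)).const_mul (f' m))
      simpa [Pi.sub_def] using hh
    have hmv := (convex_Icc a b).norm_image_sub_le_of_norm_hasDerivWithin_le hφ
      (fun t ht => hf'lip t ht) hmab hs
    have hsm' : |s - m| ≤ b - a := by
      rw [abs_sub_le_iff]; constructor <;> nlinarith [hs.1, hs.2, hmab.1, hmab.2]
    have h5 : |f s - f' m * s - (f m - f' m * m)| ≤ S * (b-a) * |s - m| := by
      simpa [Real.norm_eq_abs] using hmv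
    have h6 : f s - f' m * s - (f m - f' m * m) = f s - f m - f' m * (s - m) := by ring
    rw [h6] at h5
    nlinarith [abs_nonneg (s - m), mul_nonneg hS0 (sub_nonneg.2 hab)]
  -- |f M - f m| ≤ S * (b-a)^2
  have hfMfm : |f M - f m| ≤ S * (b-a)^2 := by
    have hsum : f M - f m = (∑ j, (f (x j) - f m - f' m * (x j - m))) / (k+1) := by
      rw [hMeq]
      have h7 : ∑ j, (f (x j) - f m - f' m * (x j - m))
          = (∑ j, f (x j)) - ((k:ℝ)+1) * f m - f' m * ((∑ j, x j) - ((k:ℝ)+1) * m) := by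
        rw [Finset.sum_sub_distrib, Finset.sum_sub_distrib, ← Finset.mul_sum,
          Finset.sum_sub_distrib]
        simp [Finset.sum_const, mul_comm]
      have h8 : (∑ j, x j) - ((k:ℝ)+1) * m = 0 := by
        rw [hm]; field_simp; ring
      rw [h7, h8, mul_zero, sub_zero]
      field_simp
    rw [hsum, abs_div, abs_of_pos hk1, div_le_iff₀ hk1]
    calc |∑ j, (f (x j) - f m - f' m * (x j - m))|
        ≤ ∑ j, |f (x j) - f m - f' m * (x j - m)| := Finset.abs_sum_le_sum_abs _ _
      _ ≤ ∑ _j : Fin (k+1), S * (b-a) * (b-a) :=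
          Finset.sum_le_sum fun j _ => htaylor (x j) (hx j)
      _ = S * (b-a)^2 * ((k:ℝ)+1) := by simp [Finset.sum_const]; ring
  -- lower bound |f M - f m| ≥ f' u * |M - m|
  have hlow : f' u * |M - m| ≤ |f M - f m| := by
    have hψ : MonotoneOn (fun t => f t - f' u * t) (Set.Icc a b) := by
      apply monotoneOn_of_hasDerivWithinAt_nonneg (convex_Icc a b)
        (f' := fun t => f' t - f' u)
      · exact ((hfc.mono hIcc).sub ((continuous_const.mul continuous_id).continuousOn))
      · intro t ht
        have ht' : t ∈ Set.Icc a b := interior_subset ht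
        have hh := (((hd1 t (hIcc ht')).mono hIcc).sub
          ((hasDerivWithinAt_id t (Set.Icc a b)).const_mul (f' u))).mono
          (interior_subset : interior (Set.Icc a b) ⊆ Set.Icc a b)
        simpa [Pi.sub_def] using hh
      · intro t ht
        have ht' : t ∈ Set.Icc a b := interior_subset ht
        have := humin ht'
        simp only [Set.mem_setOf_eq] at this
        linarith [humin ht']
    rcases le_total M m with h | h
    · have h1 := hψ hMab hmab h
      have h2 : f M ≤ f m := hsm.monotoneOn hMI (hIcc hmab) h
      simp only at h1
      rw [abs_of_nonpos (by linarith), abs_of_nonpos (by linarith)]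
      nlinarith
    · have h1 := hψ hmab hMab h
      have h2 : f m ≤ f M := hsm.monotoneOn (hIcc hmab) hMI h
      simp only at h1
      rw [abs_of_nonneg (by linarith), abs_of_nonneg (by linarith)]
      nlinarith
  -- combine
  have : f' u * |M - m| ≤ K * (Real.exp 1 * f' u) * (b-a)^2 := le_trans hlow hfMfm
  exact le_of_mul_le_mul_left (by nlinarith : f' u * |M - m| ≤ f' u * (Real.exp 1 * K * (b-a)^2)) hu0

/-- for a family `f₁,…,f_k ∈ C²(I)` with `fᵢ' ≠ 0`, `fᵢ''` of
    locally bounded variation and `|fᵢ''/fᵢ'| ≤ K`, and the mean-type mapping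
    `A(x) = (M_{f₁}(x),…,M_{f_k}(x))` (whose `i`-th entry `M i` is characterized by
    `M i ∈ I`, `fᵢ (M i) = (Σⱼ fᵢ(xⱼ))/k`), if `max x − min x < min(1/K, 1)` then
    `max A(x) − min A(x) ≤ ((3 + 7e)/3)·K·(max x − min x)²`. -/
theorem stmt12 (I : Set ℝ) (hI : Convex ℝ I) (K : ℝ) (hK : 0 < K) (k : ℕ)
    (f f' f'' : Fin (k+1) → ℝ → ℝ)
    (hd1 : ∀ i, ∀ t ∈ I, HasDerivWithinAt (f i) (f' i t) I t)
    (hd2 : ∀ i, ∀ t ∈ I, HasDerivWithinAt (f' i) (f'' i t) I t)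
    (hc : ∀ i, ContinuousOn (f'' i) I)
    (hne : ∀ i, ∀ t ∈ I, f' i t ≠ 0)
    (hbv : ∀ i, LocallyBoundedVariationOn (f'' i) I)
    (hbK : ∀ i, ∀ t ∈ I, |f'' i t / f' i t| ≤ K)
    (x : Fin (k+1) → ℝ) (hx : ∀ i, x i ∈ I)
    (hsmall : vmax x - vmin x < min (1/K) 1)
    (M : Fin (k+1) → ℝ)
    (hM : ∀ i, M i ∈ I ∧ f i (M i) = (∑ j, f i (x j)) / (k+1)) :
    vmax M - vmin M ≤ ((3 + 7 * Real.exp 1) / 3) * K * (vmax x - vmin x)^2 := by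
  set a : ℝ := vmin x with hadef
  set b : ℝ := vmax x with hbdef
  obtain ⟨i0, -, hi0⟩ := Finset.exists_mem_eq_inf' (Finset.univ_nonempty) x
  obtain ⟨i1, -, hi1⟩ := Finset.exists_mem_eq_sup' (Finset.univ_nonempty) x
  have ha : a ∈ I := by rw [hadef, vmin, hi0]; exact hx i0
  have hb : b ∈ I := by rw [hbdef, vmax, hi1]; exact hx i1
  have hxab : ∀ j, x j ∈ Set.Icc a b := fun j =>
    ⟨Finset.inf'_le _ (Finset.mem_univ j), Finset.le_sup' _ (Finset.mem_univ j)⟩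
  have hab : a ≤ b := le_trans (hxab 0).1 (hxab 0).2
  have hKd : K * (b - a) ≤ 1 := by
    have h1 : b - a < 1/K := lt_of_lt_of_le hsmall (min_le_left _ _)
    rw [lt_div_iff₀ hK] at h1
    nlinarith
  have hf'c : ∀ i, ContinuousOn (f' i) I := fun i t ht =>
    (hd2 i t ht).differentiableWithinAt.continuousWithinAt
  have hsign : ∀ i, (∀ t ∈ I, 0 < f' i t) ∨ (∀ t ∈ I, f' i t < 0) := by
    intro i
    by_cases hp : ∀ t ∈ I, 0 < f' i t
    · exact Or.inl hp
    · right
      push_neg at hp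
      obtain ⟨s, hsI, hs⟩ := hp
      have hsneg : f' i s < 0 := lt_of_le_of_ne hs (hne i s hsI)
      intro t ht
      by_contra h
      push_neg at h
      obtain ⟨z, hzI, hz⟩ := hI.isPreconnected.intermediate_value₂ hsI ht
        (hf'c i) (continuousOn_const (c := (0:ℝ))) hsneg.le h
      exact hne i z hzI hz
  have key : ∀ i, |M i - (∑ j, x j) / (k+1)| ≤ Real.exp 1 * K * (b - a)^2 := by
    intro i
    rcases hsign i with hp | hn
    · exact aux_qam I hI K hK (f i) (f' i) (f'' i) (hd1 i) (hd2 i) hp (hbK i)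
        a b ha hb hab hKd x hxab (M i) (hM i).1 (hM i).2
    · refine aux_qam I hI K hK (fun t => -(f i t)) (fun t => -(f' i t)) (fun t => -(f'' i t))
        (fun t ht => (hd1 i t ht).neg) (fun t ht => (hd2 i t ht).neg)
        (fun t ht => by simpa using hn t ht)
        (fun t ht => by rw [neg_div_neg_eq]; exact hbK i t ht)
        a b ha hb hab hKd x hxab (M i) (hM i).1 ?_
      have h2 := (hM i).2
      show -(f i (M i)) = (∑ j, -(f i (x j))) / ((k:ℝ)+1)
      rw [h2, ← neg_div, ← Finset.sum_neg_distrib]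
  set E : ℝ := Real.exp 1 * K * (b - a)^2 with hE
  set m : ℝ := (∑ j, x j) / (k+1) with hmdef
  have hupper : vmax M ≤ m + E := by
    apply Finset.sup'_le
    intro i _
    have := (abs_le.1 (key i)).2
    linarith
  have hlower : m - E ≤ vmin M := by
    apply Finset.le_inf'
    intro i _
    have := (abs_le.1 (key i)).1
    linarith
  have hexp : (0:ℝ) < Real.exp 1 := Real.exp_pos 1
  have hsq : (0:ℝ) ≤ K * (b - a)^2 := by positivity
  have : vmax M - vmin M ≤ 2 * E := by linarith
  rw [hE] at this
  nlinarith
end
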